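/- Let H be a densely defined closed operator on a complex Hilbert space 𝓗 and let T be the antiunitary conjugation (Tu)(x) = conj(u(x)) (or any antilinear involutive isometry) such that H* = T H T. Then the residual spectrum of H is empty, i.e., for every z ∈ ℂ, if H − z is injective then the range of H − z is dense. -/

import Mathlib

open MeasureTheory

/-- A densely defined closed operator `H` on a complex Hilbert space satisfying
`H* = T H T` with `T` an antilinear isometric involution (a conjugation) has empty
residual spectrum: whenever `H - z` is injective, its range is dense. -/
theorem stmt_10 {E : Type*} [NormedAddCommGroup E] [InnerProductSpace ℂ E]
    [CompleteSpace E]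
    (H : E →ₗ.[ℂ] E) (hdense : Dense (H.domain : Set E)) (hclosed : H.IsClosed)
    (T : E → E)
    (hT_add : ∀ x y, T (x + y) = T x + T y)
    (hT_smul : ∀ (c : ℂ) (x : E), T (c • x) = (starRingEnd ℂ) c • T x)
    (hT_invol : ∀ x, T (T x) = x)
    (hT_norm : ∀ x, ‖T x‖ = ‖x‖)
    (hdom : (H.adjoint.domain : Set E) = T '' (H.domain : Set E))
    (hTHT : ∀ u : H.domain, ∃ h : T u ∈ H.adjoint.domain,
      H.adjoint ⟨T u, h⟩ = T (H u))
    (z : ℂ)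
    (hinj : ∀ u v : H.domain, H u - z • (u : E) = H v - z • (v : E) → (u : E) = v) :
    Dense {y : E | ∃ u : H.domain, y = H u - z • (u : E)} := by
  have hT0 : T 0 = 0 := by
    have := hT_add 0 0
    simpa using this.symm
  set L : H.domain →ₗ[ℂ] E := H.toFun - z • H.domain.subtype with hL
  have hset : {y : E | ∃ u : H.domain, y = H u - z • (u : E)}
      = (LinearMap.range L : Set E) := by
    ext y
    constructor
    · rintro ⟨u, rfl⟩
      exact ⟨u, by simp [hL]⟩
    · rintro ⟨u, rfl⟩
      exact ⟨u, by simp [hL]⟩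
  rw [hset]
  have hbot : (LinearMap.range L)ᗮ = ⊥ := by
    rw [Submodule.eq_bot_iff]
    intro w hw
    -- orthogonality: ⟪H u - z u, w⟫ = 0
    have horth : ∀ u : H.domain, (inner ℂ ((w : E)) (H u) : ℂ)
        = inner ℂ ((starRingEnd ℂ z) • w) (u : E) := by
      intro u
      have h0 : (inner ℂ (H u - z • (u : E)) w : ℂ) = 0 :=
        (Submodule.mem_orthogonal _ w).mp hw _ ⟨u, by simp [hL]⟩
      rw [inner_sub_left, sub_eq_zero] at h0
      have h1 : (inner ℂ (H u) w : ℂ) = (starRingEnd ℂ z) * inner ℂ (u : E) w := by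
        rw [h0, inner_smul_left]
      calc (inner ℂ ((w : E)) (H u) : ℂ)
          = starRingEnd ℂ (inner ℂ (H u) w) := (inner_conj_symm _ _).symm
        _ = z * inner ℂ w (u : E) := by
            rw [h1, map_mul, Complex.conj_conj, inner_conj_symm]
        _ = inner ℂ ((starRingEnd ℂ z) • w) (u : E) := by rw [inner_smul_left]; simp
    have hwmem : w ∈ H.adjoint.domain :=
      LinearPMap.mem_adjoint_domain_of_exists w
        ⟨(starRingEnd ℂ z) • w, fun u => (horth u).symm⟩
    have hadj : H.adjoint ⟨w, hwmem⟩ = (starRingEnd ℂ z) • w :=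
      LinearPMap.adjoint_apply_eq hdense _ (fun u => (horth u).symm)
    -- w = T v for some v in domain
    have : w ∈ (H.adjoint.domain : Set E) := hwmem
    rw [hdom] at this
    obtain ⟨v, hv, hTv⟩ := this
    have hTHTv := hTHT ⟨v, hv⟩
    obtain ⟨hmem, heq⟩ := hTHTv
    have hsame : (⟨T v, hmem⟩ : H.adjoint.domain) = ⟨w, hwmem⟩ := Subtype.ext hTv
    rw [hsame, hadj] at heq
    -- (z̄) • w = T (H v), apply T
    have hHv : H ⟨v, hv⟩ = z • v := by
      have := congrArg T heq.symm
      rw [hT_invol, hT_smul, ← hTv, hT_invol] at this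
      simpa using this
    have hz : H ⟨v, hv⟩ - z • ((⟨v, hv⟩ : H.domain) : E)
        = H ⟨0, H.domain.zero_mem⟩ - z • ((⟨0, H.domain.zero_mem⟩ : H.domain) : E) := by
      have h0 : (⟨0, H.domain.zero_mem⟩ : H.domain) = 0 := rfl
      rw [h0, hHv, H.map_zero]
      simp
    have hv0 : (v : E) = 0 := by
      simpa using hinj ⟨v, hv⟩ ⟨0, H.domain.zero_mem⟩ hz
    rw [← hTv, hv0, hT0]
  exact Submodule.dense_iff_topologicalClosure_eq_top.mpr
    (Submodule.topologicalClosure_eq_top_iff.mpr hbot)
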